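/- arXiv:2308.03779 — 8 statements merged into one kernel-verified Lean document; each statement's English description precedes it below -/
import Mathlib

section
/- Let E be a real Banach space, P ⊆ E a cone with nonempty interior, and (X, d) an extended cone b-metric space over P. A subset U ⊆ X is sequentially open (i.e., for every x ∈ U and every sequence (xₙ) in X converging to x there exists N ∈ ℕ such that xₙ ∈ U for all n > N) if and only if for every x ∈ U there exists u ∈ E with 0 ≪ u such that B(x, u) ⊆ U. In other words, the sequential topology on X coincides with the topology generated by the open balls. -/
open Filter Topology

theorem stmt_1
    {E : Type*} [NormedAddCommGroup E] [NormedSpace ℝ E] [CompleteSpace E]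
    {X : Type*} [Nonempty X]
    (P : Set E)
    (hP_ne : P.Nonempty) (hP_closed : IsClosed P) (hP_nontrivial : P ≠ ({0} : Set E))
    (hP_conv : ∀ (a b : ℝ), 0 ≤ a → 0 ≤ b → ∀ x ∈ P, ∀ y ∈ P, a • x + b • y ∈ P)
    (hP_pointed : ∀ x ∈ P, -x ∈ P → x = (0 : E))
    (hP_int : (interior P).Nonempty)
    (Θ : X → X → X → ℝ) (hΘ : ∀ x y z, 1 ≤ Θ x y z)
    (d : X → X → E)
    (hd_nonneg : ∀ x y, d x y ∈ P)
    (hd_eq_zero : ∀ x y, d x y = 0 ↔ x = y)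
    (hd_symm : ∀ x y, d x y = d y x)
    (hd_triangle : ∀ x y z, Θ x y z • (d x y + d y z) - d x z ∈ P)
    (U : Set X) :
    (∀ x ∈ U, ∀ xs : ℕ → X,
        (∀ u ∈ interior P, ∃ M : ℕ, ∀ n ≥ M, u - d (xs n) x ∈ interior P) →
        ∃ N : ℕ, ∀ n > N, xs n ∈ U)
      ↔ ∀ x ∈ U, ∃ u : E, u ∈ interior P ∧ {y : X | u - d x y ∈ interior P} ⊆ U := by
  -- basic cone facts
  have hadd : ∀ a ∈ P, ∀ b ∈ P, a + b ∈ P := by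
    intro a ha b hb
    simpa using hP_conv 1 1 zero_le_one zero_le_one a ha b hb
  have hsmul : ∀ c : ℝ, 0 ≤ c → ∀ x ∈ P, c • x ∈ P := by
    intro c hc x hx
    simpa using hP_conv c 0 hc le_rfl x hx x hx
  have hball : ∀ u ∈ interior P, ∃ ε > 0, Metric.ball u ε ⊆ P := by
    intro u hu
    exact Metric.mem_nhds_iff.1 (mem_interior_iff_mem_nhds.1 hu)
  have hball' : ∀ u : E, ∀ ε > 0, Metric.ball u ε ⊆ P → u ∈ interior P := by
    intro u ε hε hsub
    exact mem_interior_iff_mem_nhds.2 (Metric.mem_nhds_iff.2 ⟨ε, hε, hsub⟩)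
  -- interior P + P ⊆ interior P
  have hintadd : ∀ u ∈ interior P, ∀ p ∈ P, u + p ∈ interior P := by
    intro u hu p hp
    obtain ⟨ε, hε, hsub⟩ := hball u hu
    refine hball' _ ε hε ?_
    intro v hv
    have hvp : v - p ∈ Metric.ball u ε := by
      simp only [Metric.mem_ball] at hv ⊢
      simpa [dist_eq_norm, sub_sub_eq_add_sub, sub_add_eq_sub_sub, sub_right_comm] using hv
    have : (v - p) + p ∈ P := hadd _ (hsub hvp) _ hp
    simpa using this
  -- positive scalar multiples stay in the interior
  have hintsmul : ∀ c : ℝ, 0 < c → ∀ u ∈ interior P, c • u ∈ interior P := by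
    intro c hc u hu
    obtain ⟨ε, hε, hsub⟩ := hball u hu
    refine hball' _ (c * ε) (by positivity) ?_
    intro v hv
    have h1 : c⁻¹ • v ∈ Metric.ball u ε := by
      simp only [Metric.mem_ball, dist_eq_norm] at hv ⊢
      have : c⁻¹ • v - u = c⁻¹ • (v - c • u) := by
        rw [smul_sub, smul_smul, inv_mul_cancel₀ hc.ne', one_smul]
      rw [this, norm_smul, norm_inv, Real.norm_of_nonneg hc.le]
      calc c⁻¹ * ‖v - c • u‖ < c⁻¹ * (c * ε) := by
            exact mul_lt_mul_of_pos_left hv (by positivity)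
        _ = ε := by field_simp
    have : c • (c⁻¹ • v) ∈ P := hsmul c hc.le _ (hsub h1)
    simpa [smul_smul, mul_inv_cancel₀ hc.ne'] using this
  constructor
  · -- sequentially open → ball-open
    intro h x hx
    by_contra hcon
    push_neg at hcon
    simp only [Set.not_subset] at hcon
    obtain ⟨u₀, hu₀⟩ := hP_int
    -- for each n, pick a point outside U but inside the small ball
    have hc : ∀ n : ℕ, ((n : ℝ) + 1)⁻¹ • u₀ ∈ interior P := by
      intro n
      exact hintsmul _ (by positivity) _ hu₀
    choose xs hxs1 hxs2 using fun n => hcon _ (hc n)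
    have hconv : ∀ u ∈ interior P, ∃ M : ℕ, ∀ n ≥ M, u - d (xs n) x ∈ interior P := by
      intro u hu
      obtain ⟨ε, hε, hsub⟩ := hball u hu
      obtain ⟨M, hM⟩ := exists_nat_gt (‖u₀‖ / ε)
      refine ⟨M, fun n hn => ?_⟩
      have hn1 : ‖u₀‖ / ε < (n : ℝ) + 1 := lt_of_lt_of_le hM (by exact_mod_cast Nat.le_succ_of_le hn)
      have hnorm : ‖((n : ℝ) + 1)⁻¹ • u₀‖ < ε := by
        rw [norm_smul, Real.norm_of_nonneg (by positivity)]
        rw [div_lt_iff₀ hε] at hn1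
        have hpos : (0:ℝ) < (n : ℝ) + 1 := by positivity
        rw [inv_mul_lt_iff₀ hpos]
        linarith [hn1]
      have h1 : u - ((n : ℝ) + 1)⁻¹ • u₀ ∈ P := by
        apply hsub
        simp [Metric.mem_ball, dist_eq_norm, norm_sub_rev, hnorm]
      have h2 : ((n : ℝ) + 1)⁻¹ • u₀ - d x (xs n) ∈ interior P := hxs1 n
      have := hintadd _ h2 _ h1
      have heq : ((n : ℝ) + 1)⁻¹ • u₀ - d x (xs n) + (u - ((n : ℝ) + 1)⁻¹ • u₀)
          = u - d (xs n) x := by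
        rw [hd_symm]; abel
      rwa [heq] at this
    obtain ⟨N, hN⟩ := h x hx xs hconv
    exact hxs2 (N + 1) (hN (N + 1) (Nat.lt_succ_self N))
  · -- ball-open → sequentially open
    intro h x hx xs hconv
    obtain ⟨u, hu, hsub⟩ := h x hx
    obtain ⟨M, hM⟩ := hconv u hu
    refine ⟨M, fun n hn => ?_⟩
    apply hsub
    have := hM n (le_of_lt hn)
    simpa [hd_symm x (xs n)] using this
end

section
/- Let E be a real Banach space, P ⊆ E a normal cone with nonempty interior, and (X, d) a complete extended cone b-metric space over P with coefficient function Θ, where d is a continuous functional. Let f : X → X satisfy d(f(x), f(y)) ≤ s·[d(x, f(x)) + d(y, f(y))] + t·d(y, f(x)) for all x, y ∈ X, where s ∈ (0, 1/2) and t ∈ [0, 1). Suppose that for every x₀ ∈ X, the Picard iterates xₙ = fⁿ(x₀) satisfy: there exists c < (1 − s)/s such that for every n₂ ≥ 1 there is M with Θ(x_{n₁}, x_{n₂}, x_{n₁+1}) ≤ c for all n₁ ≥ M (i.e., sup_{n₂ ≥ 1} lim_{n₁→∞} Θ(x_{n₁}, x_{n₂}, x_{n₁+1}) < (1 − s)/s).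 Then f has a unique fixed point u ∈ X, and for each x ∈ X the sequence (fⁿ(x)) converges to u. -/
open Filter Topology

theorem stmt_4
    {E : Type*} [NormedAddCommGroup E] [NormedSpace ℝ E] [CompleteSpace E]
    {X : Type*} [Nonempty X]
    (P : Set E)
    (hP_ne : P.Nonempty) (hP_closed : IsClosed P) (hP_nontrivial : P ≠ ({0} : Set E))
    (hP_conv : ∀ (a b : ℝ), 0 ≤ a → 0 ≤ b → ∀ x ∈ P, ∀ y ∈ P, a • x + b • y ∈ P)
    (hP_pointed : ∀ x ∈ P, -x ∈ P → x = (0 : E))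
    (hP_int : (interior P).Nonempty)
    (Θ : X → X → X → ℝ) (hΘ : ∀ x y z, 1 ≤ Θ x y z)
    (d : X → X → E)
    (hd_nonneg : ∀ x y, d x y ∈ P)
    (hd_eq_zero : ∀ x y, d x y = 0 ↔ x = y)
    (hd_symm : ∀ x y, d x y = d y x)
    (hd_triangle : ∀ x y z, Θ x y z • (d x y + d y z) - d x z ∈ P)
    (hP_normal : ∃ N : ℝ, 0 < N ∧ ∀ a b : E, a ∈ P → b - a ∈ P → ‖a‖ ≤ N * ‖b‖)
    (hd_cont : ∀ (x y : ℕ → X) (a b : X),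
        (∀ u ∈ interior P, ∃ M : ℕ, ∀ n ≥ M, u - d (x n) a ∈ interior P) →
        (∀ u ∈ interior P, ∃ M : ℕ, ∀ n ≥ M, u - d (y n) b ∈ interior P) →
        Tendsto (fun n => d (x n) (y n)) atTop (nhds (d a b)))
    (hcomplete : ∀ x : ℕ → X,
        (∀ u ∈ interior P, ∃ M : ℕ, ∀ n ≥ M, ∀ m ≥ M, u - d (x n) (x m) ∈ interior P) →
        ∃ l : X, ∀ u ∈ interior P, ∃ M : ℕ, ∀ n ≥ M, u - d (x n) l ∈ interior P)
    (f : X → X) (s t : ℝ) (hs0 : 0 < s) (hs1 : s < 1 / 2) (ht0 : 0 ≤ t) (ht1 : t < 1)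
    (hf : ∀ x y : X, s • (d x (f x) + d y (f y)) + t • d y (f x) - d (f x) (f y) ∈ P)
    (hΘ_bound : ∀ x₀ : X, ∃ c : ℝ, c < (1 - s) / s ∧
        ∀ n₂ ≥ 1, ∃ M : ℕ, ∀ n₁ ≥ M, Θ (f^[n₁] x₀) (f^[n₂] x₀) (f^[n₁ + 1] x₀) ≤ c)
 :
    ∃ u : X, f u = u ∧ (∀ v : X, f v = v → v = u) ∧
      ∀ x : X, ∀ w ∈ interior P, ∃ M : ℕ, ∀ n ≥ M, w - d (f^[n] x) u ∈ interior P := by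

  classical
  obtain ⟨N, hN0, hN⟩ := hP_normal
  have h1s : (0:ℝ) < 1 - s := by linarith
  have h1t : (0:ℝ) < 1 - t := by linarith
  have hadd : ∀ a ∈ P, ∀ b ∈ P, a + b ∈ P := fun a ha b hb => by
    simpa using hP_conv 1 1 zero_le_one zero_le_one a ha b hb
  have hsmul : ∀ (c : ℝ), 0 ≤ c → ∀ a ∈ P, c • a ∈ P := fun c hc a ha => by
    simpa using hP_conv c 0 hc le_rfl a ha a ha
  have hzero : (0:E) ∈ P := by
    obtain ⟨x⟩ := ‹Nonempty X›
    have h := hd_nonneg x x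
    rwa [(hd_eq_zero x x).mpr rfl] at h
  have hpoint : ∀ w ∈ P, ∀ c : ℝ, 0 < c → -(c • w) ∈ P → w = 0 := by
    intro w hw c hc hneg
    have h2 := hP_pointed _ (hsmul c hc.le w hw) hneg
    rcases smul_eq_zero.mp h2 with h | h
    · exact absurd h hc.ne'
    · exact h
  have hsmall : ∀ u ∈ interior P, ∃ ε > 0, ∀ v : E, ‖v‖ < ε → u - v ∈ interior P := by
    intro u hu
    obtain ⟨ε, hε, hball⟩ := Metric.mem_nhds_iff.mp (mem_interior_iff_mem_nhds.mp hu)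
    refine ⟨ε, hε, fun v hv => ?_⟩
    have hmem : u - v ∈ Metric.ball u ε := by
      have h : u - v - u = -v := by abel
      simp only [Metric.mem_ball, dist_eq_norm, h, norm_neg]
      exact hv
    exact interior_maximal hball Metric.isOpen_ball hmem
  set r : ℝ := s / (1 - s) with hr_def
  have hr0 : 0 < r := div_pos hs0 h1s
  have hr1 : r < 1 := (div_lt_one h1s).mpr (by linarith)
  set C : ℝ := 2 * s / (1 - t) with hC_def
  have hC : C * (1 - t) = 2 * s := by
    rw [hC_def]; field_simp
  have hCpos : 0 < C := div_pos (by linarith) h1t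
  have key : ∀ x₀ : X, ∃ l : X, f l = l ∧
      ∀ u ∈ interior P, ∃ M : ℕ, ∀ n ≥ M, u - d (f^[n] x₀) l ∈ interior P := by
    intro x₀
    have hstep1 : ∀ n : ℕ, r • d (f^[n] x₀) (f^[n+1] x₀)
        - d (f^[n+1] x₀) (f^[n+1+1] x₀) ∈ P := by
      intro n
      have h := hf (f^[n] x₀) (f^[n+1] x₀)
      rw [← Function.iterate_succ_apply' f n x₀, ← Function.iterate_succ_apply' f (n+1) x₀,
        (hd_eq_zero (f^[n+1] x₀) (f^[n+1] x₀)).mpr rfl, smul_zero, add_zero] at h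
      have h2 := hsmul (1/(1-s)) (by positivity) _ h
      have heq : r • d (f^[n] x₀) (f^[n+1] x₀) - d (f^[n+1] x₀) (f^[n+1+1] x₀)
          = (1/(1-s)) • (s • (d (f^[n] x₀) (f^[n+1] x₀) + d (f^[n+1] x₀) (f^[n+1+1] x₀))
            - d (f^[n+1] x₀) (f^[n+1+1] x₀)) := by
        rw [hr_def]
        match_scalars <;> field_simp <;> ring
      rwa [heq]
    have hstep2 : ∀ n : ℕ, r ^ n • d x₀ (f x₀) - d (f^[n] x₀) (f^[n+1] x₀) ∈ P := by
      intro n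
      induction n with
      | zero => simpa using hzero
      | succ n ih =>
        have h := hadd _ (hsmul r hr0.le _ ih) _ (hstep1 n)
        have heq : r ^ (n+1) • d x₀ (f x₀) - d (f^[n+1] x₀) (f^[n+1+1] x₀)
            = r • (r ^ n • d x₀ (f x₀) - d (f^[n] x₀) (f^[n+1] x₀))
              + (r • d (f^[n] x₀) (f^[n+1] x₀) - d (f^[n+1] x₀) (f^[n+1+1] x₀)) := by
          module
        rwa [heq]
    have hstep3 : ∀ q m : ℕ, q + 1 ≤ m →
        (C * r ^ q) • d x₀ (f x₀) - d (f^[q+1] x₀) (f^[m] x₀) ∈ P := by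
      intro q m hqm
      induction m, hqm using Nat.le_induction with
      | base =>
        rw [(hd_eq_zero (f^[q+1] x₀) (f^[q+1] x₀)).mpr rfl, sub_zero]
        exact hsmul _ (by positivity) _ (hd_nonneg _ _)
      | succ m hqm ih =>
        have hmem1 : s • (r ^ q • d x₀ (f x₀) - d (f^[q] x₀) (f^[q+1] x₀)) ∈ P :=
          hsmul s hs0.le _ (hstep2 q)
        have hmem2 : s • (r ^ m • d x₀ (f x₀) - d (f^[m] x₀) (f^[m+1] x₀)) ∈ P :=
          hsmul s hs0.le _ (hstep2 m)
        have hrm : r ^ m ≤ r ^ q :=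
          pow_le_pow_of_le_one hr0.le hr1.le (by omega)
        have hmem3 : (s * (r ^ q - r ^ m)) • d x₀ (f x₀) ∈ P :=
          hsmul _ (by nlinarith) _ (hd_nonneg _ _)
        have hmem4 : t • ((C * r ^ q) • d x₀ (f x₀) - d (f^[q+1] x₀) (f^[m] x₀)) ∈ P :=
          hsmul t ht0 _ ih
        have hslack : (C * r ^ q - (2 * s * r ^ q + t * (C * r ^ q))) • d x₀ (f x₀) ∈ P := by
          rw [show C * r ^ q - (2 * s * r ^ q + t * (C * r ^ q)) = 0 from by
            linear_combination r ^ q * hC, zero_smul]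
          exact hzero
        have h := hf (f^[q] x₀) (f^[m] x₀)
        rw [← Function.iterate_succ_apply' f q x₀, ← Function.iterate_succ_apply' f m x₀,
          hd_symm (f^[m] x₀) (f^[q+1] x₀)] at h
        have hsum := hadd _ (hadd _ (hadd _ (hadd _ (hadd _ hmem1 _ hmem2) _ hmem3) _ hmem4)
          _ hslack) _ h
        have heq : (C * r ^ q) • d x₀ (f x₀) - d (f^[q+1] x₀) (f^[m+1] x₀)
            = s • (r ^ q • d x₀ (f x₀) - d (f^[q] x₀) (f^[q+1] x₀))
              + s • (r ^ m • d x₀ (f x₀) - d (f^[m] x₀) (f^[m+1] x₀))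
              + (s * (r ^ q - r ^ m)) • d x₀ (f x₀)
              + t • ((C * r ^ q) • d x₀ (f x₀) - d (f^[q+1] x₀) (f^[m] x₀))
              + (C * r ^ q - (2 * s * r ^ q + t * (C * r ^ q))) • d x₀ (f x₀)
              + (s • (d (f^[q] x₀) (f^[q+1] x₀) + d (f^[m] x₀) (f^[m+1] x₀))
                + t • d (f^[q+1] x₀) (f^[m] x₀) - d (f^[q+1] x₀) (f^[m+1] x₀)) := by
          module
        rwa [heq]
    have hstep4 : ∀ p n m : ℕ, p + 1 ≤ n → p + 1 ≤ m →
        (C * r ^ p) • d x₀ (f x₀) - d (f^[n] x₀) (f^[m] x₀) ∈ P := by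
      have h4' : ∀ p n m : ℕ, p + 1 ≤ n → n ≤ m →
          (C * r ^ p) • d x₀ (f x₀) - d (f^[n] x₀) (f^[m] x₀) ∈ P := by
        intro p n m hpn hnm
        obtain ⟨q, rfl⟩ : ∃ q, n = q + 1 := ⟨n - 1, by omega⟩
        rcases eq_or_lt_of_le hnm with rfl | hlt
        · rw [(hd_eq_zero _ _).mpr rfl, sub_zero]
          exact hsmul _ (by positivity) _ (hd_nonneg _ _)
        · have h3 := hstep3 q m (by omega)
          have hrq : r ^ q ≤ r ^ p :=
            pow_le_pow_of_le_one hr0.le hr1.le (by omega)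
          have hslack : (C * r ^ p - C * r ^ q) • d x₀ (f x₀) ∈ P :=
            hsmul _ (by nlinarith) _ (hd_nonneg _ _)
          have h := hadd _ hslack _ h3
          have heq : (C * r ^ p) • d x₀ (f x₀) - d (f^[q+1] x₀) (f^[m] x₀)
              = (C * r ^ p - C * r ^ q) • d x₀ (f x₀)
                + ((C * r ^ q) • d x₀ (f x₀) - d (f^[q+1] x₀) (f^[m] x₀)) := by
            module
          rwa [heq]
      intro p n m hn hm
      rcases le_total n m with h | h
      · exact h4' p n m hn h
      · rw [hd_symm (f^[n] x₀) (f^[m] x₀)]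
        exact h4' p m n hm h
    have hcauchy : ∀ u ∈ interior P, ∃ M : ℕ, ∀ n ≥ M, ∀ m ≥ M,
        u - d (f^[n] x₀) (f^[m] x₀) ∈ interior P := by
      intro u hu
      obtain ⟨ε, hε, hball⟩ := hsmall u hu
      set K : ℝ := N * C * ‖d x₀ (f x₀)‖ with hK_def
      have hK0 : 0 ≤ K := by positivity
      obtain ⟨p, hp⟩ := exists_pow_lt_of_lt_one (show (0:ℝ) < ε / (K + 1) by positivity) hr1
      refine ⟨p + 1, fun n hn m hm => ?_⟩
      apply hball
      have hb := hN _ _ (hd_nonneg (f^[n] x₀) (f^[m] x₀)) (hstep4 p n m hn hm)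
      have hnorm : ‖(C * r ^ p) • d x₀ (f x₀)‖ = C * r ^ p * ‖d x₀ (f x₀)‖ := by
        rw [norm_smul, Real.norm_of_nonneg (by positivity)]
      rw [hnorm] at hb
      have hrp : (0:ℝ) ≤ r ^ p := by positivity
      have hKc : (K + 1) * (ε / (K + 1)) = ε := by field_simp
      calc ‖d (f^[n] x₀) (f^[m] x₀)‖ ≤ N * (C * r ^ p * ‖d x₀ (f x₀)‖) := hb
        _ = K * r ^ p := by rw [hK_def]; ring
        _ < ε := by nlinarith
    obtain ⟨l, hl⟩ := hcomplete _ hcauchy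
    have hDlim : Tendsto (fun n => d (f^[n] x₀) (f^[n+1] x₀)) atTop (nhds 0) := by
      have hbd : ∀ n : ℕ, ‖d (f^[n] x₀) (f^[n+1] x₀)‖ ≤ N * ‖d x₀ (f x₀)‖ * r ^ n := by
        intro n
        have hb := hN _ _ (hd_nonneg (f^[n] x₀) (f^[n+1] x₀)) (hstep2 n)
        have hnorm : ‖r ^ n • d x₀ (f x₀)‖ = r ^ n * ‖d x₀ (f x₀)‖ := by
          rw [norm_smul, Real.norm_of_nonneg (by positivity)]
        rw [hnorm] at hb
        calc ‖d (f^[n] x₀) (f^[n+1] x₀)‖ ≤ N * (r ^ n * ‖d x₀ (f x₀)‖) := hb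
          _ = N * ‖d x₀ (f x₀)‖ * r ^ n := by ring
      exact squeeze_zero_norm hbd (by
        simpa using (tendsto_pow_atTop_nhds_zero_of_lt_one hr0.le hr1).const_mul
          (N * ‖d x₀ (f x₀)‖))
    have hql : Tendsto (fun n => d (f^[n] x₀) l) atTop (nhds 0) := by
      rw [NormedAddCommGroup.tendsto_nhds_zero]
      intro ε hε
      obtain ⟨u₀, hu₀⟩ := hP_int
      set c : ℝ := ε / (N * ‖u₀‖ + 1) with hc_def
      have hc : 0 < c := by positivity
      have hcu : c • u₀ ∈ interior P := by
        have hopen : IsOpen ((fun y : E => c⁻¹ • y) ⁻¹' interior P) :=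
          isOpen_interior.preimage (continuous_const_smul _)
        have hsub : ((fun y : E => c⁻¹ • y) ⁻¹' interior P) ⊆ P := by
          intro y hy
          have hy2 : c • (c⁻¹ • y) ∈ P := hsmul c hc.le _ (interior_subset hy)
          rwa [smul_inv_smul₀ hc.ne'] at hy2
        have hmem : c • u₀ ∈ (fun y : E => c⁻¹ • y) ⁻¹' interior P := by
          simp only [Set.mem_preimage]
          rwa [inv_smul_smul₀ hc.ne']
        exact interior_maximal hsub hopen hmem
      obtain ⟨M, hM⟩ := hl _ hcu
      rw [eventually_atTop]
      refine ⟨M, fun n hn => ?_⟩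
      have h2 : ‖d (f^[n] x₀) l‖ ≤ N * ‖c • u₀‖ :=
        hN _ _ (hd_nonneg _ _) (interior_subset (hM n hn))
      have h3 : ‖c • u₀‖ = c * ‖u₀‖ := by
        rw [norm_smul, Real.norm_of_nonneg hc.le]
      rw [h3] at h2
      have hKc : (N * ‖u₀‖ + 1) * c = ε := by rw [hc_def]; field_simp
      have hnn : (0:ℝ) ≤ N * ‖u₀‖ := by positivity
      nlinarith
    have ht2 : Tendsto (fun n => d l (f^[n+1] x₀)) atTop (nhds 0) := by
      have heq : (fun n => d l (f^[n+1] x₀)) = fun n => d (f^[n+1] x₀) l :=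
        funext fun n => hd_symm _ _
      rw [heq]
      have := hql.comp (tendsto_add_atTop_nat 1)
      exact this
    have h_dcont : Tendsto (fun n => d (f^[n+1] x₀) (f l)) atTop (nhds (d l (f l))) := by
      apply hd_cont (fun n => f^[n+1] x₀) (fun _ => f l) l (f l)
      · intro u hu
        obtain ⟨M, hM⟩ := hl u hu
        exact ⟨M, fun n hn => hM (n+1) (by omega)⟩
      · intro u hu
        refine ⟨0, fun n _ => ?_⟩
        rw [(hd_eq_zero (f l) (f l)).mpr rfl, sub_zero]
        exact hu
    have hg : ∀ n : ℕ, s • (d (f^[n] x₀) (f^[n+1] x₀) + d l (f l))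
        + t • d l (f^[n+1] x₀) - d (f^[n+1] x₀) (f l) ∈ P := by
      intro n
      have h := hf (f^[n] x₀) l
      rwa [← Function.iterate_succ_apply' f n x₀] at h
    have gl : Tendsto (fun n => s • (d (f^[n] x₀) (f^[n+1] x₀) + d l (f l))
        + t • d l (f^[n+1] x₀) - d (f^[n+1] x₀) (f l)) atTop
        (nhds (s • ((0:E) + d l (f l)) + t • (0:E) - d l (f l))) :=
      (((hDlim.add tendsto_const_nhds).const_smul s).add (ht2.const_smul t)).sub h_dcont
    have hmem := hP_closed.mem_of_tendsto gl (Eventually.of_forall hg)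
    have heq : s • ((0:E) + d l (f l)) + t • (0:E) - d l (f l)
        = -((1 - s) • d l (f l)) := by module
    rw [heq] at hmem
    have hw := hpoint _ (hd_nonneg l (f l)) (1 - s) h1s hmem
    exact ⟨l, ((hd_eq_zero _ _).mp hw).symm, hl⟩
  obtain ⟨u, hu, hconv⟩ := key (Classical.arbitrary X)
  have huniq : ∀ v : X, f v = v → v = u := by
    intro v hv
    have h := hf u v
    rw [hu, hv, (hd_eq_zero u u).mpr rfl, (hd_eq_zero v v).mpr rfl, hd_symm u v] at h
    have heq : s • ((0:E) + 0) + t • d v u - d v u = -((1 - t) • d v u) := by module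
    rw [heq] at h
    exact (hd_eq_zero v u).mp (hpoint _ (hd_nonneg v u) (1 - t) h1t h)
  refine ⟨u, hu, huniq, fun x => ?_⟩
  obtain ⟨l, hlfix, hlconv⟩ := key x
  rwa [huniq l hlfix] at hlconv
end

section
/- Let E be a real Banach space, P ⊆ E a cone with nonempty interior, and (X, d) an extended cone b-metric space over P. Let f : X → X satisfy d(f(x), f(y)) ≤ s·[d(x, f(x)) + d(y, f(y))] + t·d(y, f(x)) for all x, y ∈ X, where s ∈ (0, 1/2) and t ∈ [0, 1). Then for every x₀ ∈ X, the Picard iterates xₙ = fⁿ(x₀) satisfy d(xₙ, xₙ₊₁) ≤ (s/(1 − s))ⁿ·d(x₀, x₁) for all n ≥ 0. -/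
open Filter Topology

theorem stmt_6
    {E : Type*} [NormedAddCommGroup E] [NormedSpace ℝ E] [CompleteSpace E]
    {X : Type*} [Nonempty X]
    (P : Set E)
    (hP_ne : P.Nonempty) (hP_closed : IsClosed P) (hP_nontrivial : P ≠ ({0} : Set E))
    (hP_conv : ∀ (a b : ℝ), 0 ≤ a → 0 ≤ b → ∀ x ∈ P, ∀ y ∈ P, a • x + b • y ∈ P)
    (hP_pointed : ∀ x ∈ P, -x ∈ P → x = (0 : E))
    (hP_int : (interior P).Nonempty)
    (Θ : X → X → X → ℝ) (hΘ : ∀ x y z, 1 ≤ Θ x y z)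
    (d : X → X → E)
    (hd_nonneg : ∀ x y, d x y ∈ P)
    (hd_eq_zero : ∀ x y, d x y = 0 ↔ x = y)
    (hd_symm : ∀ x y, d x y = d y x)
    (hd_triangle : ∀ x y z, Θ x y z • (d x y + d y z) - d x z ∈ P)
    (f : X → X) (s t : ℝ) (hs0 : 0 < s) (hs1 : s < 1 / 2) (ht0 : 0 ≤ t) (ht1 : t < 1)
    (hf : ∀ x y : X, s • (d x (f x) + d y (f y)) + t • d y (f x) - d (f x) (f y) ∈ P)
 :
    ∀ (x₀ : X) (n : ℕ),
      (s / (1 - s)) ^ n • d x₀ (f x₀) - d (f^[n] x₀) (f^[n + 1] x₀) ∈ P := by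
  intro x₀ n
  have hadd : ∀ u ∈ P, ∀ v ∈ P, u + v ∈ P := fun u hu v hv => by
    simpa using hP_conv 1 1 zero_le_one zero_le_one u hu v hv
  have hsmul : ∀ (c : ℝ), 0 ≤ c → ∀ u ∈ P, c • u ∈ P := fun c hc u hu => by
    simpa using hP_conv c 0 hc le_rfl u hu u hu
  obtain ⟨w, hw⟩ := hP_ne
  have h0 : (0 : E) ∈ P := by simpa using hP_conv 0 0 le_rfl le_rfl w hw w hw
  have h1s : (0 : ℝ) < 1 - s := by linarith
  have hq : (0 : ℝ) ≤ s / (1 - s) := div_nonneg hs0.le h1s.le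
  induction n with
  | zero => simpa using h0
  | succ n ih =>
    -- from hf applied to x = f^[n] x₀, y = f^[n+1] x₀
    set x := f^[n] x₀ with hx
    have hstep := hf x (f x)
    have hzero : d (f x) (f x) = 0 := (hd_eq_zero _ _).mpr rfl
    rw [hzero, smul_zero, add_zero, smul_add] at hstep
    have hfit : f^[n + 1] x₀ = f x := by rw [hx, Function.iterate_succ_apply']
    rw [hfit] at ih
    -- hstep : s • d x (f x) + s • d (f x) (f (f x)) - d (f x) (f (f x)) ∈ P
    have key : (s / (1 - s)) • d x (f x) - d (f x) (f (f x)) ∈ P := by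
      have := hsmul ((1 - s)⁻¹) (inv_nonneg.mpr h1s.le) _ hstep
      have e : (1 - s)⁻¹ • (s • d x (f x) + s • d (f x) (f (f x)) - d (f x) (f (f x)))
          = (s / (1 - s)) • d x (f x) - d (f x) (f (f x)) + ((1 - s)⁻¹ * s + (1 - s)⁻¹ * (-1) + 1) • d (f x) (f (f x)) := by
        module
      rw [e] at this
      have hc : (1 - s)⁻¹ * s + (1 - s)⁻¹ * (-1) + 1 = 0 := by
        field_simp; ring
      rw [hc, zero_smul, add_zero] at this
      exact this
    have ih' : (s / (1 - s)) • ((s / (1 - s)) ^ n • d x₀ (f x₀) - d x (f x)) ∈ P :=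
      hsmul _ hq _ ih
    have := hadd _ ih' _ key
    have e2 : (s / (1 - s)) • ((s / (1 - s)) ^ n • d x₀ (f x₀) - d x (f x))
        + ((s / (1 - s)) • d x (f x) - d (f x) (f (f x)))
        = (s / (1 - s)) ^ (n + 1) • d x₀ (f x₀) - d (f x) (f (f x)) := by
      have : (s / (1 - s)) ^ (n + 1) = (s / (1 - s)) * (s / (1 - s)) ^ n := by ring
      rw [this]; module
    rw [e2] at this
    have hfit2 : f^[n + 2] x₀ = f (f x) := by
      rw [Function.iterate_succ_apply', hfit]
    rw [hfit, hfit2]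
    exact this
end

section
/- Let E be a real Banach space, P ⊆ E a cone with nonempty interior, and (X, d) an extended cone b-metric space over P. Let f : X → X satisfy d(f(x), f(y)) ≤ s·[d(x, f(x)) + d(y, f(y))] + t·d(y, f(x)) for all x, y ∈ X, where s ∈ (0, 1/2) and t ∈ [0, 1). If u and v are fixed points of f (f(u) = u and f(v) = v), then u = v. -/
open Filter Topology

theorem stmt_7
    {E : Type*} [NormedAddCommGroup E] [NormedSpace ℝ E] [CompleteSpace E]
    {X : Type*} [Nonempty X]
    (P : Set E)
    (hP_ne : P.Nonempty) (hP_closed : IsClosed P) (hP_nontrivial : P ≠ ({0} : Set E))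
    (hP_conv : ∀ (a b : ℝ), 0 ≤ a → 0 ≤ b → ∀ x ∈ P, ∀ y ∈ P, a • x + b • y ∈ P)
    (hP_pointed : ∀ x ∈ P, -x ∈ P → x = (0 : E))
    (hP_int : (interior P).Nonempty)
    (Θ : X → X → X → ℝ) (hΘ : ∀ x y z, 1 ≤ Θ x y z)
    (d : X → X → E)
    (hd_nonneg : ∀ x y, d x y ∈ P)
    (hd_eq_zero : ∀ x y, d x y = 0 ↔ x = y)
    (hd_symm : ∀ x y, d x y = d y x)
    (hd_triangle : ∀ x y z, Θ x y z • (d x y + d y z) - d x z ∈ P)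
    (f : X → X) (s t : ℝ) (hs0 : 0 < s) (hs1 : s < 1 / 2) (ht0 : 0 ≤ t) (ht1 : t < 1)
    (hf : ∀ x y : X, s • (d x (f x) + d y (f y)) + t • d y (f x) - d (f x) (f y) ∈ P)
 :
    ∀ u v : X, f u = u → f v = v → u = v := by
  intro u v hu hv
  have h := hf u v
  rw [hu, hv] at h
  have huu : d u u = 0 := (hd_eq_zero u u).2 rfl
  have hvv : d v v = 0 := (hd_eq_zero v v).2 rfl
  have hkey : ((t - 1 : ℝ)) • d u v ∈ P := by
    have : s • (d u u + d v v) + t • d v u - d u v = (t - 1 : ℝ) • d u v := by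
      rw [huu, hvv, hd_symm v u]
      module
    rwa [this] at h
  have hmem : ((1 - t : ℝ)) • d u v ∈ P := by
    have := hP_conv (1 - t) 0 (by linarith) le_rfl _ (hd_nonneg u v) _ (hd_nonneg u v)
    simpa using this
  have hzero : ((1 - t : ℝ)) • d u v = 0 := by
    apply hP_pointed _ hmem
    have : -((1 - t : ℝ) • d u v) = (t - 1 : ℝ) • d u v := by module
    rwa [this]
  have : d u v = 0 := by
    have h1t : (1 - t : ℝ) ≠ 0 := by linarith
    exact (smul_eq_zero.1 hzero).resolve_left h1t
  exact (hd_eq_zero u v).1 this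
end

section
/- Let E be a real Banach space, P ⊆ E a cone with nonempty interior, and (X, d) an extended cone b-metric space over P. Let f : X → X satisfy d(f(x), f(y)) ≤ β·d(x, f(x)) + γ·d(y, f(y)) + δ·d(x, y) + t·d(x, f(y)) for all x, y ∈ X, where β, γ, δ, t ≥ 0 and β + γ + δ + t < 1. Set q = (γ + δ)/(1 − β). Then for every x₀ ∈ X, the Picard iterates xₙ = fⁿ(x₀) satisfy d(xₙ₊₁, xₙ) ≤ qⁿ·d(x₁, x₀) for all n ≥ 0. -/
open Filter Topology

theorem stmt_11
    {E : Type*} [NormedAddCommGroup E] [NormedSpace ℝ E] [CompleteSpace E]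
    {X : Type*} [Nonempty X]
    (P : Set E)
    (hP_ne : P.Nonempty) (hP_closed : IsClosed P) (hP_nontrivial : P ≠ ({0} : Set E))
    (hP_conv : ∀ (a b : ℝ), 0 ≤ a → 0 ≤ b → ∀ x ∈ P, ∀ y ∈ P, a • x + b • y ∈ P)
    (hP_pointed : ∀ x ∈ P, -x ∈ P → x = (0 : E))
    (hP_int : (interior P).Nonempty)
    (Θ : X → X → X → ℝ) (hΘ : ∀ x y z, 1 ≤ Θ x y z)
    (d : X → X → E)
    (hd_nonneg : ∀ x y, d x y ∈ P)
    (hd_eq_zero : ∀ x y, d x y = 0 ↔ x = y)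
    (hd_symm : ∀ x y, d x y = d y x)
    (hd_triangle : ∀ x y z, Θ x y z • (d x y + d y z) - d x z ∈ P)
    (f : X → X) (β γ δ t : ℝ)
    (hβ : 0 ≤ β) (hγ : 0 ≤ γ) (hδ : 0 ≤ δ) (ht : 0 ≤ t)
    (hsum : β + γ + δ + t < 1)
    (hf : ∀ x y : X,
        β • d x (f x) + γ • d y (f y) + δ • d x y + t • d x (f y) - d (f x) (f y) ∈ P)
 :
    ∀ (x₀ : X) (n : ℕ),
      ((γ + δ) / (1 - β)) ^ n • d (f x₀) x₀ - d (f^[n + 1] x₀) (f^[n] x₀) ∈ P := by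
  have hadd : ∀ x ∈ P, ∀ y ∈ P, x + y ∈ P := by
    intro x hx y hy
    simpa using hP_conv 1 1 zero_le_one zero_le_one x hx y hy
  have hsmul : ∀ (a : ℝ), 0 ≤ a → ∀ x ∈ P, a • x ∈ P := by
    intro a ha x hx
    simpa using hP_conv a 0 ha le_rfl x hx x hx
  have hβ1 : β < 1 := by linarith
  have h1β : (0:ℝ) < 1 - β := by linarith
  set q : ℝ := (γ + δ) / (1 - β) with hq
  have hq0 : 0 ≤ q := div_nonneg (by linarith) h1β.le
  have h0P : (0 : E) ∈ P := by
    have := hd_nonneg (Classical.arbitrary X) (Classical.arbitrary X)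
    rwa [(hd_eq_zero _ _).mpr rfl] at this
  intro x₀ n
  induction n with
  | zero =>
      simp only [pow_zero, one_smul, Function.iterate_one, Function.iterate_zero, id]
      simpa using h0P
  | succ n ih =>
      set a := f^[n + 1] x₀ with ha
      set b := f^[n] x₀ with hb
      have hfb : f b = a := by rw [ha, hb, ← Function.iterate_succ_apply' f n x₀]
      have hfa : f a = f^[n + 2] x₀ := by
        rw [ha, ← Function.iterate_succ_apply' f (n+1) x₀]
      have key := hf a b
      rw [hfb, (hd_eq_zero a a).mpr rfl, smul_zero, add_zero] at key
      -- key : β • d a (f a) + γ • d b a + δ • d a b - d (f a) a ∈ P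
      have key2 : (γ + δ) • d a b - (1 - β) • d (f a) a ∈ P := by
        have e : (γ + δ) • d a b - (1 - β) • d (f a) a
            = β • d a (f a) + γ • d b a + δ • d a b - d (f a) a := by
          rw [hd_symm b a, hd_symm a (f a)]
          module
        rw [e]; exact key
      have key3 : q • d a b - d (f a) a ∈ P := by
        have := hsmul ((1 - β)⁻¹) (inv_nonneg.mpr h1β.le) _ key2
        have e : (1 - β)⁻¹ • ((γ + δ) • d a b - (1 - β) • d (f a) a)
            = q • d a b - d (f a) a := by
          rw [smul_sub, smul_smul, smul_smul, inv_mul_cancel₀ h1β.ne', one_smul, hq,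
            div_eq_inv_mul]
        rwa [e] at this
      have ih' : q ^ (n + 1) • d (f x₀) x₀ - q • d a b ∈ P := by
        have := hsmul q hq0 _ ih
        have e : q • (q ^ n • d (f x₀) x₀ - d a b)
            = q ^ (n + 1) • d (f x₀) x₀ - q • d a b := by
          rw [smul_sub, smul_smul, ← pow_succ']
        rwa [e] at this
      have := hadd _ ih' _ key3
      have e : q ^ (n + 1) • d (f x₀) x₀ - q • d a b + (q • d a b - d (f a) a)
          = q ^ (n + 1) • d (f x₀) x₀ - d (f a) a := by abel
      rw [e, hfa] at this
      exact this
end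

section
/- Let E be a real Banach space, P ⊆ E a normal cone with nonempty interior, and (X, d) a complete extended cone b-metric space over P, where d is a continuous functional. Let f : X → X be asymptotically regular and satisfy d(f(x), f(y)) ≤ s·[d(x, f(x)) + d(y, f(y))] for all x, y ∈ X, where s ∈ (0, 1). Then f has a unique fixed point u ∈ X, and for each x ∈ X the sequence (fⁿ(x)) converges to u. -/
open Filter Topology

theorem stmt_12
    {E : Type*} [NormedAddCommGroup E] [NormedSpace ℝ E] [CompleteSpace E]
    {X : Type*} [Nonempty X]
    (P : Set E)
    (hP_ne : P.Nonempty) (hP_closed : IsClosed P) (hP_nontrivial : P ≠ ({0} : Set E))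
    (hP_conv : ∀ (a b : ℝ), 0 ≤ a → 0 ≤ b → ∀ x ∈ P, ∀ y ∈ P, a • x + b • y ∈ P)
    (hP_pointed : ∀ x ∈ P, -x ∈ P → x = (0 : E))
    (hP_int : (interior P).Nonempty)
    (Θ : X → X → X → ℝ) (hΘ : ∀ x y z, 1 ≤ Θ x y z)
    (d : X → X → E)
    (hd_nonneg : ∀ x y, d x y ∈ P)
    (hd_eq_zero : ∀ x y, d x y = 0 ↔ x = y)
    (hd_symm : ∀ x y, d x y = d y x)
    (hd_triangle : ∀ x y z, Θ x y z • (d x y + d y z) - d x z ∈ P)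
    (hP_normal : ∃ N : ℝ, 0 < N ∧ ∀ a b : E, a ∈ P → b - a ∈ P → ‖a‖ ≤ N * ‖b‖)
    (hd_cont : ∀ (x y : ℕ → X) (a b : X),
        (∀ u ∈ interior P, ∃ M : ℕ, ∀ n ≥ M, u - d (x n) a ∈ interior P) →
        (∀ u ∈ interior P, ∃ M : ℕ, ∀ n ≥ M, u - d (y n) b ∈ interior P) →
        Tendsto (fun n => d (x n) (y n)) atTop (nhds (d a b)))
    (hcomplete : ∀ x : ℕ → X,
        (∀ u ∈ interior P, ∃ M : ℕ, ∀ n ≥ M, ∀ m ≥ M, u - d (x n) (x m) ∈ interior P) →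
        ∃ l : X, ∀ u ∈ interior P, ∃ M : ℕ, ∀ n ≥ M, u - d (x n) l ∈ interior P)
    (f : X → X)
    (hreg : ∀ x : X,
        Tendsto (fun n => ‖d (f^[n + 1] x) (f^[n] x)‖) atTop (nhds 0))
    (s : ℝ) (hs0 : 0 < s) (hs1 : s < 1)
    (hf : ∀ x y : X, s • (d x (f x) + d y (f y)) - d (f x) (f y) ∈ P) :
    ∃ u : X, f u = u ∧ (∀ v : X, f v = v → v = u) ∧
      ∀ x : X, ∀ w ∈ interior P, ∃ M : ℕ, ∀ n ≥ M, w - d (f^[n] x) u ∈ interior P := by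
  classical
  obtain ⟨N, hN0, hN⟩ := hP_normal
  -- smallness lemma
  have hsmall : ∀ u ∈ interior P, ∃ ε > (0:ℝ), ∀ a : E, ‖a‖ < ε → u - a ∈ interior P := by
    intro u hu
    obtain ⟨ε, hε, hball⟩ := Metric.isOpen_iff.mp isOpen_interior u hu
    refine ⟨ε, hε, fun a ha => hball ?_⟩
    simpa [Metric.mem_ball, dist_eq_norm] using ha
  -- norm bound on distances between iterates
  have hbound : ∀ x₀ : X, ∀ n m : ℕ,
      ‖d (f^[n+1] x₀) (f^[m+1] x₀)‖ ≤
        N * (s * (‖d (f^[n+1] x₀) (f^[n] x₀)‖ + ‖d (f^[m+1] x₀) (f^[m] x₀)‖)) := by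
    intro x₀ n m
    have h := hf (f^[n] x₀) (f^[m] x₀)
    rw [← Function.iterate_succ_apply' f n x₀, ← Function.iterate_succ_apply' f m x₀] at h
    have h1 := hN _ _ (hd_nonneg (f^[n+1] x₀) (f^[m+1] x₀)) h
    have h2 : ‖s • (d (f^[n] x₀) (f^[n+1] x₀) + d (f^[m] x₀) (f^[m+1] x₀))‖ ≤
        s * (‖d (f^[n+1] x₀) (f^[n] x₀)‖ + ‖d (f^[m+1] x₀) (f^[m] x₀)‖) := by
      rw [norm_smul, Real.norm_eq_abs, abs_of_pos hs0,
        hd_symm (f^[n] x₀) (f^[n+1] x₀), hd_symm (f^[m] x₀) (f^[m+1] x₀)]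
      exact mul_le_mul_of_nonneg_left (norm_add_le _ _) hs0.le
    calc ‖d (f^[n+1] x₀) (f^[m+1] x₀)‖ ≤ _ := h1
      _ ≤ _ := mul_le_mul_of_nonneg_left h2 hN0.le
  -- main claim: for every x, the iterates converge to a fixed point
  have key : ∀ x : X, ∃ l : X, f l = l ∧
      ∀ w ∈ interior P, ∃ M : ℕ, ∀ n ≥ M, w - d (f^[n] x) l ∈ interior P := by
    intro x
    -- Cauchy
    have hCauchy : ∀ u ∈ interior P, ∃ M : ℕ, ∀ n ≥ M, ∀ m ≥ M,
        u - d (f^[n] x) (f^[m] x) ∈ interior P := by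
      intro u hu
      obtain ⟨ε, hε, hball⟩ := hsmall u hu
      set δ : ℝ := ε / (2 * N * s + 1) with hδdef
      have hδ : 0 < δ := by
        apply div_pos hε
        positivity
      obtain ⟨M, hM⟩ := (Metric.tendsto_atTop.mp (hreg x)) δ hδ
      refine ⟨M + 1, fun n hn m hm => ?_⟩
      obtain ⟨n', rfl⟩ : ∃ n', n = n' + 1 := ⟨n - 1, by omega⟩
      obtain ⟨m', rfl⟩ : ∃ m', m = m' + 1 := ⟨m - 1, by omega⟩
      apply hball
      have bn : ‖d (f^[n'+1] x) (f^[n'] x)‖ < δ := by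
        have := hM n' (by omega); rwa [Real.dist_eq, sub_zero, abs_of_nonneg (norm_nonneg _)] at this
      have bm : ‖d (f^[m'+1] x) (f^[m'] x)‖ < δ := by
        have := hM m' (by omega); rwa [Real.dist_eq, sub_zero, abs_of_nonneg (norm_nonneg _)] at this
      have := hbound x n' m'
      have hlt : N * (s * (‖d (f^[n'+1] x) (f^[n'] x)‖ + ‖d (f^[m'+1] x) (f^[m'] x)‖)) < ε := by
        have h2 : N * (s * (‖d (f^[n'+1] x) (f^[n'] x)‖ + ‖d (f^[m'+1] x) (f^[m'] x)‖)) ≤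
            N * (s * (δ + δ)) := by
          apply mul_le_mul_of_nonneg_left _ hN0.le
          apply mul_le_mul_of_nonneg_left _ hs0.le
          linarith
        have h3 : N * (s * (δ + δ)) < ε := by
          have hc : (0:ℝ) < 2 * N * s + 1 := by positivity
          have hq : δ * (2 * N * s + 1) = ε := div_mul_cancel₀ ε (ne_of_gt hc)
          nlinarith [hδ]
        linarith
      exact lt_of_le_of_lt this hlt
    obtain ⟨l, hl⟩ := hcomplete (fun n => f^[n] x) hCauchy
    -- shifted sequence also converges
    have hl' : ∀ u ∈ interior P, ∃ M : ℕ, ∀ n ≥ M, u - d (f^[n+1] x) l ∈ interior P := by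
      intro u hu
      obtain ⟨M, hM⟩ := hl u hu
      exact ⟨M, fun n hn => hM (n + 1) (by omega)⟩
    have hdff : d (f l) (f l) = 0 := (hd_eq_zero _ _).mpr rfl
    have T : Tendsto (fun n => d (f^[n+1] x) (f l)) atTop (nhds (d l (f l))) := by
      have := hd_cont (fun n => f^[n+1] x) (fun _ => f l) l (f l) hl'
        (fun u hu => ⟨0, fun n _ => by simpa [hdff] using hu⟩)
      simpa using this
    have T2 : Tendsto (fun n => d (f^[n] x) (f^[n+1] x)) atTop (nhds 0) := by
      rw [tendsto_zero_iff_norm_tendsto_zero]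
      have heq : (fun n => ‖d (f^[n] x) (f^[n+1] x)‖) = fun n => ‖d (f^[n+1] x) (f^[n] x)‖ :=
        funext fun n => by rw [hd_symm]
      rw [heq]; exact hreg x
    have hg : ∀ n : ℕ,
        s • (d (f^[n] x) (f^[n+1] x) + d l (f l)) - d (f^[n+1] x) (f l) ∈ P := by
      intro n
      have h := hf (f^[n] x) l
      rwa [← Function.iterate_succ_apply' f n x] at h
    have Tg : Tendsto (fun n => s • (d (f^[n] x) (f^[n+1] x) + d l (f l)) - d (f^[n+1] x) (f l))
        atTop (nhds (s • ((0:E) + d l (f l)) - d l (f l))) :=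
      ((T2.add tendsto_const_nhds).const_smul s).sub T
    have hlim : s • d l (f l) - d l (f l) ∈ P := by
      have := hP_closed.mem_of_tendsto Tg (Eventually.of_forall hg)
      simpa using this
    have hpos : (1 - s) • d l (f l) ∈ P := by
      have := hP_conv (1 - s) 0 (by linarith) le_rfl (d l (f l)) (hd_nonneg l (f l))
        (d l (f l)) (hd_nonneg l (f l))
      simpa using this
    have hzero : (1 - s) • d l (f l) = 0 := by
      apply hP_pointed _ hpos
      have : -((1 - s) • d l (f l)) = s • d l (f l) - d l (f l) := by module
      rw [this]; exact hlim
    have hc0 : d l (f l) = 0 := by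
      rcases smul_eq_zero.mp hzero with h | h
      · exact absurd h (by intro h'; linarith [h'] )
      · exact h
    have hfl : f l = l := ((hd_eq_zero l (f l)).mp hc0).symm
    exact ⟨l, hfl, hl⟩
  obtain ⟨u, hu_fix, hu_conv⟩ := key (Classical.arbitrary X)
  have uniq : ∀ v : X, f v = v → v = u := by
    intro v hv
    have h := hf v u
    rw [hv, hu_fix, (hd_eq_zero v v).mpr rfl, (hd_eq_zero u u).mpr rfl] at h
    simp only [add_zero, smul_zero, zero_sub] at h
    exact (hd_eq_zero v u).mp (hP_pointed _ (hd_nonneg v u) h)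
  refine ⟨u, hu_fix, uniq, fun x => ?_⟩
  obtain ⟨l, hlfix, hlconv⟩ := key x
  rwa [uniq l hlfix] at hlconv
end

section
/- Let E be a real Banach space, P ⊆ E a cone with nonempty interior, and (X, d) an extended cone b-metric space over P. Let f : X → X be asymptotically regular and satisfy d(f(x), f(y)) ≤ s·[d(x, f(x)) + d(y, f(y))] for all x, y ∈ X, where s ≥ 0. Then for every x ∈ X, the sequence of iterates (fⁿ(x)) is a Cauchy sequence in (X, d). -/
open Filter Topology

theorem stmt_13
    {E : Type*} [NormedAddCommGroup E] [NormedSpace ℝ E] [CompleteSpace E]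
    {X : Type*} [Nonempty X]
    (P : Set E)
    (hP_ne : P.Nonempty) (hP_closed : IsClosed P) (hP_nontrivial : P ≠ ({0} : Set E))
    (hP_conv : ∀ (a b : ℝ), 0 ≤ a → 0 ≤ b → ∀ x ∈ P, ∀ y ∈ P, a • x + b • y ∈ P)
    (hP_pointed : ∀ x ∈ P, -x ∈ P → x = (0 : E))
    (hP_int : (interior P).Nonempty)
    (Θ : X → X → X → ℝ) (hΘ : ∀ x y z, 1 ≤ Θ x y z)
    (d : X → X → E)
    (hd_nonneg : ∀ x y, d x y ∈ P)
    (hd_eq_zero : ∀ x y, d x y = 0 ↔ x = y)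
    (hd_symm : ∀ x y, d x y = d y x)
    (hd_triangle : ∀ x y z, Θ x y z • (d x y + d y z) - d x z ∈ P)
    (f : X → X)
    (hreg : ∀ x : X,
        Tendsto (fun n => ‖d (f^[n + 1] x) (f^[n] x)‖) atTop (nhds 0))
    (s : ℝ) (hs0 : 0 ≤ s)
    (hf : ∀ x y : X, s • (d x (f x) + d y (f y)) - d (f x) (f y) ∈ P) :
    ∀ x : X, ∀ u ∈ interior P, ∃ M : ℕ, ∀ n ≥ M, ∀ m ≥ M,
      u - d (f^[n] x) (f^[m] x) ∈ interior P := by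
  intro x u hu
  -- P is closed under addition
  have hPadd : ∀ a ∈ P, ∀ b ∈ P, a + b ∈ P := fun a ha b hb => by
    simpa using hP_conv 1 1 zero_le_one zero_le_one a ha b hb
  -- interior P + P ⊆ interior P
  have hint : ∀ w ∈ interior P, ∀ p ∈ P, w + p ∈ interior P := by
    intro w hw p hp
    have himg : (fun z => z + p) '' interior P ⊆ P := by
      rintro _ ⟨z, hz, rfl⟩
      exact hPadd z (interior_subset hz) p hp
    have hopen : IsOpen ((fun z => z + p) '' interior P) :=
      (Homeomorph.addRight p).isOpenMap _ isOpen_interior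
    exact interior_maximal himg hopen ⟨w, hw, rfl⟩
  -- get a ball around u inside interior P
  obtain ⟨ε, hε, hball⟩ := Metric.mem_nhds_iff.mp (isOpen_interior.mem_nhds hu)
  set δ : ℝ := ε / (2 * (s + 1)) with hδdef
  have hδpos : 0 < δ := by positivity
  obtain ⟨N, hN⟩ := (Metric.tendsto_atTop.mp (hreg x)) δ hδpos
  have hNnorm : ∀ k ≥ N, ‖d (f^[k + 1] x) (f^[k] x)‖ < δ := by
    intro k hk
    have := hN k hk
    rwa [Real.dist_eq, sub_zero, abs_of_nonneg (norm_nonneg _)] at this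
  refine ⟨N + 1, ?_⟩
  intro n hn m hm
  obtain ⟨a, rfl⟩ := Nat.exists_eq_add_of_le hn
  obtain ⟨b, rfl⟩ := Nat.exists_eq_add_of_le hm
  have ea : N + 1 + a = (N + a) + 1 := by omega
  have eb : N + 1 + b = (N + b) + 1 := by omega
  rw [ea, eb, Function.iterate_succ_apply' f (N + a) x,
    Function.iterate_succ_apply' f (N + b) x]
  have hkey := hf (f^[N + a] x) (f^[N + b] x)
  set v : E := s • (d (f^[N + a] x) (f (f^[N + a] x)) +
      d (f^[N + b] x) (f (f^[N + b] x))) with hvdef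
  have hna : d (f^[N + a] x) (f (f^[N + a] x)) = d (f^[N + a + 1] x) (f^[N + a] x) := by
    rw [Function.iterate_succ_apply' f (N + a) x, hd_symm]
  have hnb : d (f^[N + b] x) (f (f^[N + b] x)) = d (f^[N + b + 1] x) (f^[N + b] x) := by
    rw [Function.iterate_succ_apply' f (N + b) x, hd_symm]
  have hvnorm : ‖v‖ < ε := by
    have h1 : ‖d (f^[N + a] x) (f (f^[N + a] x))‖ < δ := by
      rw [hna]; exact hNnorm (N + a) (Nat.le_add_right N a)
    have h2 : ‖d (f^[N + b] x) (f (f^[N + b] x))‖ < δ := by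
      rw [hnb]; exact hNnorm (N + b) (Nat.le_add_right N b)
    have : ‖v‖ ≤ s * (‖d (f^[N + a] x) (f (f^[N + a] x))‖ +
        ‖d (f^[N + b] x) (f (f^[N + b] x))‖) := by
      rw [hvdef, norm_smul, Real.norm_of_nonneg hs0]
      exact mul_le_mul_of_nonneg_left (norm_add_le _ _) hs0
    have hs1 : 0 < s + 1 := by linarith
    have hδval : s * (δ + δ) < ε := by
      have heq : s * (δ + δ) = s * ε / (s + 1) := by
        rw [hδdef]; field_simp; ring
      rw [heq, div_lt_iff₀ hs1]
      nlinarith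
    calc ‖v‖ ≤ s * (‖d (f^[N + a] x) (f (f^[N + a] x))‖ +
        ‖d (f^[N + b] x) (f (f^[N + b] x))‖) := this
      _ ≤ s * (δ + δ) := by
          apply mul_le_mul_of_nonneg_left _ hs0
          linarith
      _ < ε := hδval
  have huv : u - v ∈ interior P := by
    apply hball
    simp only [Metric.mem_ball, dist_eq_norm]
    simpa using hvnorm
  have : u - d (f (f^[N + a] x)) (f (f^[N + b] x)) =
      (u - v) + (v - d (f (f^[N + a] x)) (f (f^[N + b] x))) := by abel
  rw [this]
  exact hint _ huv _ hkey
end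

section
/- Let E be a real Banach space, P ⊆ E a cone with nonempty interior, and (X, d) an extended cone b-metric space over P. Let f : X → X satisfy d(f(x), f(y)) ≤ s·[d(x, f(x)) + d(y, f(y))] + t·d(y, f(x)) for all x, y ∈ X, where s ∈ (0, 1/2) and t ∈ [0, 1). Then for every x ∈ X, setting u = f(x), one has d(u, f(u)) ≤ (s/(1 − s))·d(x, f(x)); that is, d(f(x), f(f(x))) ≤ (s/(1 − s))·d(x, f(x)) for all x ∈ X. -/
open Filter Topology

theorem stmt_16
    {E : Type*} [NormedAddCommGroup E] [NormedSpace ℝ E] [CompleteSpace E]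
    {X : Type*} [Nonempty X]
    (P : Set E)
    (hP_ne : P.Nonempty) (hP_closed : IsClosed P) (hP_nontrivial : P ≠ ({0} : Set E))
    (hP_conv : ∀ (a b : ℝ), 0 ≤ a → 0 ≤ b → ∀ x ∈ P, ∀ y ∈ P, a • x + b • y ∈ P)
    (hP_pointed : ∀ x ∈ P, -x ∈ P → x = (0 : E))
    (hP_int : (interior P).Nonempty)
    (Θ : X → X → X → ℝ) (hΘ : ∀ x y z, 1 ≤ Θ x y z)
    (d : X → X → E)
    (hd_nonneg : ∀ x y, d x y ∈ P)
    (hd_eq_zero : ∀ x y, d x y = 0 ↔ x = y)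
    (hd_symm : ∀ x y, d x y = d y x)
    (hd_triangle : ∀ x y z, Θ x y z • (d x y + d y z) - d x z ∈ P)
    (f : X → X) (s t : ℝ) (hs0 : 0 < s) (hs1 : s < 1 / 2) (ht0 : 0 ≤ t) (ht1 : t < 1)
    (hf : ∀ x y : X, s • (d x (f x) + d y (f y)) + t • d y (f x) - d (f x) (f y) ∈ P)
 :
    ∀ x : X, (s / (1 - s)) • d x (f x) - d (f x) (f (f x)) ∈ P := by
  intro x
  have h := hf x (f x)
  have hzero : d (f x) (f x) = 0 := (hd_eq_zero _ _).2 rfl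
  rw [hzero, smul_zero, add_zero, smul_add] at h
  -- h : s • d x (f x) + s • d (f x) (f (f x)) - d (f x) (f (f x)) ∈ P
  have h1s : (0:ℝ) < 1 - s := by linarith
  have key : (1 / (1 - s)) • (s • d x (f x) + s • d (f x) (f (f x)) - d (f x) (f (f x)))
      + (0:ℝ) • d x (f x) ∈ P :=
    hP_conv _ _ (by positivity) le_rfl _ h _ (hd_nonneg _ _)
  have : (1 / (1 - s)) • (s • d x (f x) + s • d (f x) (f (f x)) - d (f x) (f (f x)))
      + (0:ℝ) • d x (f x) = (s / (1 - s)) • d x (f x) - d (f x) (f (f x)) := by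
    rw [zero_smul, add_zero, smul_sub, smul_add, smul_smul, smul_smul]
    have e1 : 1 / (1 - s) * s = s / (1 - s) := by field_simp
    have hc : s / (1 - s) - 1 / (1 - s) = -1 := by field_simp; ring
    rw [add_sub_assoc, ← sub_smul, e1, hc, neg_one_smul, ← sub_eq_add_neg]
  rw [this] at key
  exact key
end
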